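/- Embedding into a commutator subgroup: Every countable group B admits a countable group G and an injective group homomorphism B → G whose image is contained in the commutator subgroup [G, G] of G. -/

import Mathlib

open scoped commutatorElement

section Aux

open SemidirectProduct

variable (B : Type*) [Group B]

private def shiftAut' : MulAut (ℤ → B) where
  toFun f := fun n => f (n - 1)
  invFun f := fun n => f (n + 1)
  left_inv f := by ext n; simp
  right_inv f := by ext n; simp
  map_mul' f g := by ext n; simp [Pi.mul_apply]

private abbrev Wr := (ℤ → B) ⋊[zpowersHom (MulAut (ℤ → B)) (shiftAut' B)] Multiplicative ℤ

private noncomputable def ψ' : B →* Wr B :=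
  (inl : (ℤ → B) →* Wr B).comp (MonoidHom.mulSingle (fun _ : ℤ => B) 0)

private def Fn (b : B) : ℤ → B := fun n => if 0 ≤ n then b else 1

private def tgen : Wr B := inr (Multiplicative.ofAdd 1)

private theorem key (b : B) : ψ' B b = ⁅(inl (Fn B b) : Wr B), tgen B⁆ := by
  have h : ⁅(inl (Fn B b) : Wr B), tgen B⁆
      = inl (Fn B b) * (inr (Multiplicative.ofAdd 1) * inl (Fn B b)⁻¹ *
          inr (Multiplicative.ofAdd 1)⁻¹) := by
    rw [commutatorElement_def]; simp [tgen, mul_assoc]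
  rw [h, ← inl_aut, ← map_mul]
  simp only [ψ', MonoidHom.comp_apply, MonoidHom.mulSingle_apply]
  congr 1
  funext n
  have hpow : (zpowersHom (MulAut (ℤ → B)) (shiftAut' B)) (Multiplicative.ofAdd 1)
      = shiftAut' B := by simp [zpowersHom_apply]
  rw [hpow]
  show Pi.mulSingle (M := fun _ : ℤ => B) 0 b n = (Fn B b * shiftAut' B (Fn B b)⁻¹) n
  simp only [Pi.mul_apply, Fn]
  show Pi.mulSingle (M := fun _ : ℤ => B) 0 b n
      = (if 0 ≤ n then b else 1) * ((Fn B b)⁻¹ (n - 1))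
  simp only [Pi.inv_apply, Fn]
  rcases lt_trichotomy n 0 with h | h | h
  · rw [Pi.mulSingle_apply, if_neg h.ne, if_neg (by omega), if_neg (by omega)]; simp
  · subst h; norm_num
  · rw [Pi.mulSingle_apply, if_neg (by omega), if_pos h.le, if_pos (by omega)]; simp

private theorem psi_injective : Function.Injective (ψ' B) :=
  inl_injective.comp (Pi.mulSingle_injective (M := fun _ : ℤ => B) 0)

end Aux

/-- **Embedding into a commutator subgroup**: every countable group `B` admits a countable
group `G` and an injective homomorphism `B → G` with image inside `[G, G]`. -/
theorem countable_embeds_in_commutator (B : Type*) [Group B] [Countable B] :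
    ∃ (G : Type) (_ : Group G), Countable G ∧
      ∃ φ : B →* G, Function.Injective φ ∧ φ.range ≤ commutator G := by
  classical
  -- generators
  set u : B ⊕ Unit → Wr B := fun x => Sum.elim (fun b => SemidirectProduct.inl (Fn B b))
    (fun _ => tgen B) x with hu
  set L : FreeGroup (B ⊕ Unit) →* Wr B := FreeGroup.lift u with hL
  set G' : Subgroup (Wr B) := L.range with hG'
  haveI : Countable (FreeGroup (B ⊕ Unit)) :=
    Function.Injective.countable FreeGroup.toWord_injective
  haveI hGc : Countable G' := L.rangeRestrict_surjective.countable
  have hx : ∀ b : B, (SemidirectProduct.inl (Fn B b) : Wr B) ∈ G' :=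
    fun b => ⟨FreeGroup.of (Sum.inl b), FreeGroup.lift_apply_of⟩
  have hy : tgen B ∈ G' := ⟨FreeGroup.of (Sum.inr ()), FreeGroup.lift_apply_of⟩
  have hmem : ∀ b : B, ψ' B b ∈ G' := fun b => by
    rw [key]; exact mul_mem (mul_mem (mul_mem (hx b) hy) (inv_mem (hx b))) (inv_mem hy)
  set φ₀ : B →* G' := (ψ' B).codRestrict G' hmem with hφ₀
  have hφ₀inj : Function.Injective φ₀ := fun a b hab => by
    apply psi_injective B
    exact congrArg Subtype.val hab
  have hcomm : ∀ b : B, ∃ x y : G', φ₀ b = ⁅x, y⁆ := by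
    intro b
    refine ⟨⟨_, hx b⟩, ⟨_, hy⟩, ?_⟩
    apply Subtype.ext
    have h2 := key B b
    rw [commutatorElement_def] at h2 ⊢
    simpa [hφ₀] using h2
  -- shrink universe
  obtain ⟨f, hf⟩ := exists_injective_nat G'
  let e : G' ≃ Set.range f := Equiv.ofInjective f hf
  letI : Group (Set.range f) := e.symm.group
  let μ : Set.range f ≃* G' := e.symm.mulEquiv
  refine ⟨Set.range f, inferInstance, inferInstance,
    μ.symm.toMonoidHom.comp φ₀, ?_, ?_⟩
  · exact μ.symm.injective.comp hφ₀inj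
  · rintro x ⟨b, rfl⟩
    obtain ⟨p, q, hpq⟩ := hcomm b
    simp only [MonoidHom.comp_apply, MulEquiv.coe_toMonoidHom, hpq,
      map_commutatorElement]
    exact Subgroup.commutator_mem_commutator (Subgroup.mem_top _) (Subgroup.mem_top _)
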